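/- Let F be a finite field with q elements, a ∈ F nonzero, and n ≥ 2. Let X be a nonzero singular n×n matrix over F satisfying X² = a•X. Then there exists k with 1 ≤ k ≤ ⌊n/2⌋ such that X is similar over F (i.e. conjugate by some element of GL(n,F)) to either X_k(0,a) or X_k(a,a). -/

import Mathlib

open Matrix

/-- The `n × n` block-diagonal matrix `X_k(b,a)` whose first block is the scalar
matrix `b • I` of size `n - 2k`, followed by `k` diagonal blocks each equal to
`Q(a) = !![0, 1; 0, a]`. -/
def Xk {F : Type*} [Field F] (n k : ℕ) (b a : F) : Matrix (Fin n) (Fin n) F :=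
  Matrix.of fun i j =>
    if (i : ℕ) < n - 2 * k ∨ (j : ℕ) < n - 2 * k then
      if (i : ℕ) = (j : ℕ) then b else 0
    else if ((i : ℕ) - (n - 2 * k)) / 2 = ((j : ℕ) - (n - 2 * k)) / 2 ∧
        ((j : ℕ) - (n - 2 * k)) % 2 = 1 then
      if ((i : ℕ) - (n - 2 * k)) % 2 = 0 then 1 else a
    else 0

namespace SimAux

variable {F : Type*} [Field F] {n d : ℕ}

lemma factor_sq (a : F) (C : Matrix (Fin n) (Fin d) F) (R : Matrix (Fin d) (Fin n) F)
    (hRC : R * C = a • 1) : (C * R) * (C * R) = a • (C * R) := by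
  calc (C * R) * (C * R) = C * (R * C) * R := by
        rw [Matrix.mul_assoc, Matrix.mul_assoc, Matrix.mul_assoc]
    _ = a • (C * R) := by
        rw [hRC, Matrix.mul_smul, Matrix.mul_one, Matrix.smul_mul]

lemma factor_rank (a : F) (ha : a ≠ 0) (C : Matrix (Fin n) (Fin d) F)
    (R : Matrix (Fin d) (Fin n) F) (hRC : R * C = a • 1) : (C * R).rank = d := by
  have hle : (C * R).rank ≤ d := by
    have := Matrix.rank_mul_le_left C R
    have h2 := Matrix.rank_le_card_width C
    simpa using le_trans this (by simpa using h2)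
  have hunit : IsUnit ((a * a) • (1 : Matrix (Fin d) (Fin d) F)) := by
    refine ⟨⟨_, ((a*a)⁻¹) • (1 : Matrix (Fin d) (Fin d) F), ?_, ?_⟩, rfl⟩ <;>
      rw [Matrix.smul_mul, Matrix.mul_smul, Matrix.one_mul, smul_smul] <;>
      field_simp <;> simp
  have key : (R * (C * R)) * C = (a * a) • 1 := by
    calc (R * (C * R)) * C = (R * C) * (R * C) := by
          rw [Matrix.mul_assoc, Matrix.mul_assoc, Matrix.mul_assoc]
    _ = (a * a) • 1 := by
        rw [hRC, Matrix.smul_mul, Matrix.mul_smul, Matrix.one_mul, smul_smul]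
  have hge : d ≤ (C * R).rank := by
    have h1 : ((R * (C * R)) * C).rank = d := by
      rw [key, Matrix.rank_of_isUnit _ hunit, Fintype.card_fin]
    have h2 : ((R * (C * R)) * C).rank ≤ (C * R).rank :=
      le_trans (Matrix.rank_mul_le_left _ _) (Matrix.rank_mul_le_right _ _)
    omega
  omega


lemma range_apply_eq {A : Matrix (Fin n) (Fin n) F} {a : F} (hA : A * A = a • A)
    {x : Fin n → F} (hx : x ∈ LinearMap.range A.mulVecLin) :
    A.mulVecLin x = a • x := by
  obtain ⟨u, hu⟩ := hx
  have : A.mulVecLin (A.mulVecLin u) = a • A.mulVecLin u := by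
    simp only [Matrix.mulVecLin_apply, Matrix.mulVec_mulVec, hA, Matrix.smul_mulVec]
  rw [hu] at this
  exact this

lemma isCompl_range_ker {A : Matrix (Fin n) (Fin n) F} {a : F} (ha : a ≠ 0)
    (hA : A * A = a • A) :
    IsCompl (LinearMap.range A.mulVecLin) (LinearMap.ker A.mulVecLin) := by
  constructor
  · rw [disjoint_iff_inf_le]
    rintro v ⟨hv1, hv2⟩
    have h1 : A.mulVecLin v = a • v := range_apply_eq hA hv1
    have h2 : A.mulVecLin v = 0 := hv2
    rw [h2] at h1
    rcases smul_eq_zero.mp h1.symm with h | h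
    · exact absurd h ha
    · simp [h]
  · rw [codisjoint_iff_le_sup]
    intro v _
    rw [Submodule.mem_sup]
    refine ⟨a⁻¹ • A.mulVecLin v, ⟨a⁻¹ • v, by simp⟩, v - a⁻¹ • A.mulVecLin v, ?_, by abel⟩
    have h2 : A.mulVecLin (A.mulVecLin v) = a • A.mulVecLin v := by
      simp only [Matrix.mulVecLin_apply, Matrix.mulVec_mulVec, hA, Matrix.smul_mulVec]
    simp only [LinearMap.mem_ker, map_sub, LinearMap.map_smul, h2, smul_smul,
      inv_mul_cancel₀ ha, one_smul, sub_self]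

lemma similar_of_sq {A B : Matrix (Fin n) (Fin n) F} {a : F} (ha : a ≠ 0)
    (hA : A * A = a • A) (hB : B * B = a • B) (hr : A.rank = B.rank) :
    ∃ P : GL (Fin n) F, (P : Matrix (Fin n) (Fin n) F) * B *
      ((P⁻¹ : GL (Fin n) F) : Matrix (Fin n) (Fin n) F) = A := by
  have hcA := isCompl_range_ker ha hA
  have hcB := isCompl_range_ker ha hB
  have hrange : Module.finrank F (LinearMap.range A.mulVecLin)
      = Module.finrank F (LinearMap.range B.mulVecLin) := hr
  have hker : Module.finrank F (LinearMap.ker A.mulVecLin)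
      = Module.finrank F (LinearMap.ker B.mulVecLin) := by
    have hsum1 := LinearMap.finrank_range_add_finrank_ker A.mulVecLin
    have hsum2 := LinearMap.finrank_range_add_finrank_ker B.mulVecLin
    have hfin : Module.finrank F (Fin n → F) = n := by simp
    rw [hfin] at hsum1 hsum2
    omega
  obtain ⟨φ⟩ := FiniteDimensional.nonempty_linearEquiv_of_finrank_eq hrange
  obtain ⟨ψ⟩ := FiniteDimensional.nonempty_linearEquiv_of_finrank_eq hker
  set σ : (Fin n → F) ≃ₗ[F] (Fin n → F) :=
    (Submodule.prodEquivOfIsCompl _ _ hcA).symm.trans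
      ((φ.prodCongr ψ).trans (Submodule.prodEquivOfIsCompl _ _ hcB)) with hσdef
  have hσ_apply : ∀ v, σ v =
      ((φ ((Submodule.prodEquivOfIsCompl _ _ hcA).symm v).1 : LinearMap.range B.mulVecLin) : Fin n → F)
      + ((ψ ((Submodule.prodEquivOfIsCompl _ _ hcA).symm v).2 : LinearMap.ker B.mulVecLin) : Fin n → F) := by
    intro v
    rw [hσdef]
    simp only [LinearEquiv.trans_apply, LinearEquiv.prodCongr_apply]
    exact Submodule.coe_prodEquivOfIsCompl' _ _ hcB _
  have key : ∀ v, σ (A.mulVecLin v) = B.mulVecLin (σ v) := by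
    intro v
    set x := ((Submodule.prodEquivOfIsCompl _ _ hcA).symm v).1 with hxdef
    set y := ((Submodule.prodEquivOfIsCompl _ _ hcA).symm v).2 with hydef
    have hv : (x : Fin n → F) + (y : Fin n → F) = v := by
      conv_rhs => rw [← (Submodule.prodEquivOfIsCompl _ _ hcA).apply_symm_apply v]
      exact (Submodule.coe_prodEquivOfIsCompl' _ _ hcA _).symm
    have hfv : A.mulVecLin v = a • (x : Fin n → F) := by
      conv_lhs => rw [← hv]
      rw [map_add, LinearMap.mem_ker.mp y.2, add_zero, range_apply_eq hA x.2]
    have hσx : σ (x : Fin n → F) = ((φ x : LinearMap.range B.mulVecLin) : Fin n → F) := by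
      rw [hσ_apply, Submodule.prodEquivOfIsCompl_symm_apply_left _ _ hcA]
      show ((φ x : LinearMap.range B.mulVecLin) : Fin n → F)
        + ((ψ 0 : LinearMap.ker B.mulVecLin) : Fin n → F) = _
      rw [ψ.map_zero, Submodule.coe_zero, add_zero]
    rw [hfv, LinearEquiv.map_smul, hσx, hσ_apply v, map_add, ← hxdef, ← hydef,
      range_apply_eq hB (φ x).2, LinearMap.mem_ker.mp (ψ y).2, add_zero]
  have hcomp : (σ.symm : (Fin n → F) →ₗ[F] (Fin n → F)) ∘ₗ
      ((B.mulVecLin) ∘ₗ (σ : (Fin n → F) →ₗ[F] (Fin n → F))) = A.mulVecLin := by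
    apply LinearMap.ext
    intro v
    simp only [LinearMap.coe_comp, Function.comp_apply, LinearEquiv.coe_coe]
    rw [← key v, LinearEquiv.symm_apply_apply]
  set M := LinearMap.toMatrix' (σ : (Fin n → F) →ₗ[F] (Fin n → F)) with hM
  set M' := LinearMap.toMatrix' (σ.symm : (Fin n → F) →ₗ[F] (Fin n → F)) with hM'
  have hMM' : M * M' = 1 := by
    rw [hM, hM', ← LinearMap.toMatrix'_comp, ← LinearMap.toMatrix'_id (n := Fin n) (R := F)]
    congr 1
    apply LinearMap.ext; intro v; simp
  have hM'M : M' * M = 1 := by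
    rw [hM, hM', ← LinearMap.toMatrix'_comp, ← LinearMap.toMatrix'_id (n := Fin n) (R := F)]
    congr 1
    apply LinearMap.ext; intro v; simp
  have hmain : M' * B * M = A := by
    have h1 : A = LinearMap.toMatrix' A.mulVecLin := by
      rw [← Matrix.toLin'_apply', LinearMap.toMatrix'_toLin']
    have h2 : B = LinearMap.toMatrix' B.mulVecLin := by
      rw [← Matrix.toLin'_apply', LinearMap.toMatrix'_toLin']
    rw [h1, ← hcomp, LinearMap.toMatrix'_comp, LinearMap.toMatrix'_comp, ← hM, ← hM', ← h2,
      Matrix.mul_assoc]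
  exact ⟨⟨M', M, hM'M, hMM'⟩, hmain⟩
def Cmat0 (n k : ℕ) (a : F) : Matrix (Fin n) (Fin k) F :=
  Matrix.of fun i t => if (i : ℕ) = (n - 2*k) + 2*(t : ℕ) then 1
    else if (i : ℕ) = (n - 2*k) + 2*(t : ℕ) + 1 then a else 0

def Rmat0 (n k : ℕ) : Matrix (Fin k) (Fin n) F :=
  Matrix.of fun t j => if (j : ℕ) = (n - 2*k) + 2*(t : ℕ) + 1 then 1 else 0

lemma Rmat0_mul_Cmat0 (n k : ℕ) (hk : 2*k ≤ n) (a : F) :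
    (Rmat0 n k : Matrix (Fin k) (Fin n) F) * Cmat0 n k a = a • 1 := by
  ext t s
  have ht := t.isLt
  have hs := s.isLt
  set i₀ : Fin n := ⟨(n - 2*k) + 2*(t : ℕ) + 1, by omega⟩ with hi₀
  have e : ∀ i : Fin n, (Rmat0 n k (F := F)) t i * Cmat0 n k a i s
      = if i = i₀ then Cmat0 n k a i₀ s else 0 := by
    intro i
    by_cases h : i = i₀
    · subst h
      simp [Rmat0, hi₀]
    · have hne : (i : ℕ) ≠ (n - 2*k) + 2*(t : ℕ) + 1 := by
        intro hc
        exact h (Fin.ext hc)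
      simp only [Rmat0, Matrix.of_apply, if_neg hne, zero_mul, if_neg h]
  rw [Matrix.mul_apply, Finset.sum_congr rfl (fun i _ => e i),
    Finset.sum_ite_eq' Finset.univ i₀, if_pos (Finset.mem_univ i₀)]
  have hi₀v : (i₀ : ℕ) = (n - 2*k) + 2*(t : ℕ) + 1 := rfl
  simp only [Cmat0, Matrix.of_apply, Matrix.smul_apply, Matrix.one_apply, smul_eq_mul]
  rw [if_neg (by omega)]
  by_cases hts : t = s
  · subst hts
    rw [if_pos (by omega), if_pos rfl, mul_one]
  · have : (t : ℕ) ≠ (s : ℕ) := fun hc => hts (Fin.ext hc)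
    rw [if_neg (by omega), if_neg hts, mul_zero]

lemma Cmat0_mul_Rmat0 (n k : ℕ) (hk : 2*k ≤ n) (a : F) :
    Cmat0 n k a * (Rmat0 n k : Matrix (Fin k) (Fin n) F) = Xk n k 0 a := by
  ext i j
  have hi := i.isLt
  have hjlt := j.isLt
  rw [Matrix.mul_apply]
  by_cases hj : (n - 2*k) ≤ (j : ℕ) ∧ ((j : ℕ) - (n - 2*k)) % 2 = 1
  · set s : Fin k := ⟨((j : ℕ) - (n - 2*k))/2, by omega⟩ with hsdef
    have hsv : (s : ℕ) = ((j : ℕ) - (n - 2*k))/2 := rfl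
    have e : ∀ t : Fin k, Cmat0 n k a i t * Rmat0 n k t j
        = if t = s then Cmat0 n k a i s else 0 := by
      intro t
      by_cases h : t = s
      · subst h
        simp only [Rmat0, Matrix.of_apply]
        rw [if_pos (by omega)]
        simp
      · have : (t : ℕ) ≠ (s : ℕ) := fun hc => h (Fin.ext hc)
        simp only [Rmat0, Matrix.of_apply]
        rw [if_neg (by omega), mul_zero, if_neg h]
    rw [Finset.sum_congr rfl (fun t _ => e t), Finset.sum_ite_eq' Finset.univ s,
      if_pos (Finset.mem_univ s)]
    simp only [Cmat0, Xk, Matrix.of_apply]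
    split_ifs <;> first | rfl | omega
  · rw [Finset.sum_eq_zero, eq_comm]
    · simp only [Xk, Matrix.of_apply]
      split_ifs <;> first | rfl | omega
    · intro t _
      have ht := t.isLt
      simp only [Rmat0, Matrix.of_apply]
      rw [if_neg (by omega), mul_zero]

def Cmat1 (n k : ℕ) (a : F) : Matrix (Fin n) (Fin (n - k)) F :=
  Matrix.of fun i s =>
    if (s : ℕ) < n - 2*k then (if (i : ℕ) = (s : ℕ) then 1 else 0)
    else if (i : ℕ) = (n - 2*k) + 2*((s : ℕ) - (n - 2*k)) then 1
    else if (i : ℕ) = (n - 2*k) + 2*((s : ℕ) - (n - 2*k)) + 1 then a else 0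

def Rmat1 (n k : ℕ) (a : F) : Matrix (Fin (n - k)) (Fin n) F :=
  Matrix.of fun s j =>
    if (s : ℕ) < n - 2*k then (if (j : ℕ) = (s : ℕ) then a else 0)
    else if (j : ℕ) = (n - 2*k) + 2*((s : ℕ) - (n - 2*k)) + 1 then 1 else 0

lemma Rmat1_mul_Cmat1 (n k : ℕ) (hk : 2*k ≤ n) (a : F) :
    Rmat1 n k a * Cmat1 n k a = a • 1 := by
  ext s s'
  have hs := s.isLt
  have hs' := s'.isLt
  by_cases hsm : (s : ℕ) < n - 2*k
  · set i₀ : Fin n := ⟨(s : ℕ), by omega⟩ with hi₀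
    have e : ∀ i : Fin n, Rmat1 n k a s i * Cmat1 n k a i s'
        = if i = i₀ then a * Cmat1 n k a i₀ s' else 0 := by
      intro i
      by_cases h : i = i₀
      · subst h
        simp [Rmat1, hi₀, hsm]
      · have hne : (i : ℕ) ≠ (s : ℕ) := fun hc => h (Fin.ext hc)
        simp only [Rmat1, Matrix.of_apply, if_pos hsm, if_neg hne, zero_mul, if_neg h]
    rw [Matrix.mul_apply, Finset.sum_congr rfl (fun i _ => e i),
      Finset.sum_ite_eq' Finset.univ i₀, if_pos (Finset.mem_univ i₀)]
    have hi₀v : (i₀ : ℕ) = (s : ℕ) := rfl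
    simp only [Cmat1, Matrix.of_apply, Matrix.smul_apply, Matrix.one_apply, smul_eq_mul]
    by_cases hs'm : (s' : ℕ) < n - 2*k
    · rw [if_pos hs'm]
      by_cases hss : s = s'
      · subst hss
        simp [hi₀v]
      · have : (s : ℕ) ≠ (s' : ℕ) := fun hc => hss (Fin.ext hc)
        rw [if_neg (by omega), if_neg hss]
    · have hss : s ≠ s' := by
        intro hc; subst hc; omega
      rw [if_neg hs'm, if_neg (by omega), if_neg (by omega), if_neg hss]
  · set i₀ : Fin n := ⟨(n - 2*k) + 2*((s : ℕ) - (n - 2*k)) + 1, by omega⟩ with hi₀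
    have e : ∀ i : Fin n, Rmat1 n k a s i * Cmat1 n k a i s'
        = if i = i₀ then Cmat1 n k a i₀ s' else 0 := by
      intro i
      by_cases h : i = i₀
      · subst h
        simp [Rmat1, hi₀, hsm]
      · have hne : (i : ℕ) ≠ (n - 2*k) + 2*((s : ℕ) - (n - 2*k)) + 1 :=
          fun hc => h (Fin.ext hc)
        simp only [Rmat1, Matrix.of_apply, if_neg hsm, if_neg hne, zero_mul, if_neg h]
    rw [Matrix.mul_apply, Finset.sum_congr rfl (fun i _ => e i),
      Finset.sum_ite_eq' Finset.univ i₀, if_pos (Finset.mem_univ i₀)]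
    have hi₀v : (i₀ : ℕ) = (n - 2*k) + 2*((s : ℕ) - (n - 2*k)) + 1 := rfl
    simp only [Cmat1, Matrix.of_apply, Matrix.smul_apply, Matrix.one_apply, smul_eq_mul]
    by_cases hs'm : (s' : ℕ) < n - 2*k
    · have hss : s ≠ s' := by intro hc; subst hc; omega
      rw [if_pos hs'm, if_neg (by omega), if_neg hss, mul_zero]
    · rw [if_neg hs'm, if_neg (by omega)]
      by_cases hss : s = s'
      · subst hss
        rw [if_pos (by omega), if_pos rfl, mul_one]
      · have : (s : ℕ) ≠ (s' : ℕ) := fun hc => hss (Fin.ext hc)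
        rw [if_neg (by omega), if_neg hss, mul_zero]

lemma Cmat1_mul_Rmat1 (n k : ℕ) (hk : 2*k ≤ n) (a : F) :
    Cmat1 n k a * Rmat1 n k a = Xk n k a a := by
  ext i j
  have hi := i.isLt
  have hjlt := j.isLt
  rw [Matrix.mul_apply]
  by_cases hjm : (j : ℕ) < n - 2*k
  · set s₀ : Fin (n - k) := ⟨(j : ℕ), by omega⟩ with hs₀
    have e : ∀ s : Fin (n - k), Cmat1 n k a i s * Rmat1 n k a s j
        = if s = s₀ then Cmat1 n k a i s₀ * a else 0 := by
      intro s
      by_cases h : s = s₀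
      · subst h
        simp only [Rmat1, Matrix.of_apply, hs₀]
        rw [if_pos (by omega)]
        simp
      · have hne : (s : ℕ) ≠ (j : ℕ) := fun hc => h (Fin.ext hc)
        simp only [Rmat1, Matrix.of_apply]
        by_cases hsm : (s : ℕ) < n - 2*k
        · rw [if_pos hsm, if_neg (by omega), mul_zero, if_neg h]
        · rw [if_neg hsm, if_neg (by omega), mul_zero, if_neg h]
    rw [Finset.sum_congr rfl (fun s _ => e s), Finset.sum_ite_eq' Finset.univ s₀,
      if_pos (Finset.mem_univ s₀)]
    have hs₀v : (s₀ : ℕ) = (j : ℕ) := rfl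
    simp only [Cmat1, Xk, Matrix.of_apply]
    rw [if_pos (by omega : (s₀ : ℕ) < n - 2*k), if_pos (Or.inr hjm)]
    by_cases hij : (i : ℕ) = (j : ℕ)
    · rw [if_pos (by omega), if_pos hij, one_mul]
    · rw [if_neg (by omega), if_neg hij, zero_mul]
  · by_cases hj : ((j : ℕ) - (n - 2*k)) % 2 = 1
    · set s₀ : Fin (n - k) := ⟨(n - 2*k) + ((j : ℕ) - (n - 2*k))/2, by omega⟩ with hs₀
      have hs₀v : (s₀ : ℕ) = (n - 2*k) + ((j : ℕ) - (n - 2*k))/2 := rfl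
      have e : ∀ s : Fin (n - k), Cmat1 n k a i s * Rmat1 n k a s j
          = if s = s₀ then Cmat1 n k a i s₀ else 0 := by
        intro s
        by_cases h : s = s₀
        · subst h
          simp only [Rmat1, Matrix.of_apply]
          rw [if_neg (by omega), if_pos (by omega), mul_one]
          simp
        · have hne : (s : ℕ) ≠ (s₀ : ℕ) := fun hc => h (Fin.ext hc)
          simp only [Rmat1, Matrix.of_apply]
          by_cases hsm : (s : ℕ) < n - 2*k
          · rw [if_pos hsm, if_neg (by omega), mul_zero, if_neg h]
          · rw [if_neg hsm, if_neg (by omega), mul_zero, if_neg h]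
      rw [Finset.sum_congr rfl (fun s _ => e s), Finset.sum_ite_eq' Finset.univ s₀,
        if_pos (Finset.mem_univ s₀)]
      simp only [Cmat1, Xk, Matrix.of_apply]
      rw [if_neg (by omega : ¬ (s₀ : ℕ) < n - 2*k)]
      split_ifs <;> first | rfl | omega
    · rw [Finset.sum_eq_zero, eq_comm]
      · simp only [Xk, Matrix.of_apply]
        split_ifs <;> first | rfl | omega
      · intro s _
        have hs := s.isLt
        simp only [Rmat1, Matrix.of_apply]
        by_cases hsm : (s : ℕ) < n - 2*k
        · rw [if_pos hsm, if_neg (by omega), mul_zero]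
        · rw [if_neg hsm, if_neg (by omega), mul_zero]
lemma rank_pos_of_ne_zero (X : Matrix (Fin n) (Fin n) F) (hX0 : X ≠ 0) : 1 ≤ X.rank := by
  rcases Nat.eq_zero_or_pos X.rank with h | h
  · exfalso
    apply hX0
    have hb : LinearMap.range X.mulVecLin = ⊥ := Submodule.finrank_eq_zero.mp h
    have h0 : X.mulVecLin = 0 := LinearMap.range_eq_bot.mp hb
    ext i j
    have h1 : X.mulVec (Pi.single j 1) = 0 := by
      have := congrFun (congrArg (fun (f : (Fin n → F) →ₗ[F] (Fin n → F)) => f.toFun) h0)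
        (Pi.single j 1)
      simpa using this
    have h2 := congrFun (X.mulVec_single_one j)
    rw [h1] at h2
    simpa using (h2 i).symm
  · exact h

lemma rank_lt_of_det_eq_zero (X : Matrix (Fin n) (Fin n) F) (hXsing : X.det = 0) :
    X.rank < n := by
  by_contra h
  have hrn : X.rank ≤ n := by simpa using X.rank_le_card_width
  have hr' : X.rank = n := le_antisymm hrn (not_lt.mp h)
  have htop : LinearMap.range X.mulVecLin = ⊤ := by
    apply Submodule.eq_top_of_finrank_eq
    rw [Module.finrank_fin_fun]
    exact hr'
  have hsurj : Function.Surjective (X.mulVec) := by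
    intro v
    obtain ⟨u, hu⟩ := LinearMap.range_eq_top.mp htop v
    exact ⟨u, hu⟩
  have hunit : IsUnit X := Matrix.mulVec_surjective_iff_isUnit.mp hsurj
  have hdet := (Matrix.isUnit_iff_isUnit_det X).mp hunit
  rw [hXsing] at hdet
  simpa using hdet

end SimAux

theorem stmt_4 (F : Type*) [Field F] [Fintype F] (a : F) (ha : a ≠ 0) (n : ℕ) (hn : 2 ≤ n)
    (X : Matrix (Fin n) (Fin n) F) (hX : X * X = a • X) (hX0 : X ≠ 0) (hXsing : X.det = 0) :
    ∃ k : ℕ, 1 ≤ k ∧ k ≤ n / 2 ∧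
      ((∃ P : GL (Fin n) F,
          (P : Matrix (Fin n) (Fin n) F) * Xk n k 0 a *
            ((P⁻¹ : GL (Fin n) F) : Matrix (Fin n) (Fin n) F) = X) ∨
       (∃ P : GL (Fin n) F,
          (P : Matrix (Fin n) (Fin n) F) * Xk n k a a *
            ((P⁻¹ : GL (Fin n) F) : Matrix (Fin n) (Fin n) F) = X)) := by
  have hr1 : 1 ≤ X.rank := SimAux.rank_pos_of_ne_zero X hX0
  have hrlt : X.rank < n := SimAux.rank_lt_of_det_eq_zero X hXsing
  by_cases hcase : X.rank ≤ n / 2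
  · refine ⟨X.rank, hr1, hcase, Or.inl ?_⟩
    have hk2 : 2 * X.rank ≤ n := by omega
    have h1 := SimAux.Cmat0_mul_Rmat0 n X.rank hk2 a
    have h2 := SimAux.Rmat0_mul_Cmat0 n X.rank hk2 a
    have hsq : Xk n X.rank 0 a * Xk n X.rank 0 a = a • Xk n X.rank 0 a := by
      rw [← h1]; exact SimAux.factor_sq a _ _ h2
    have hrk : (Xk n X.rank 0 a).rank = X.rank := by
      rw [← h1]; exact SimAux.factor_rank a ha _ _ h2
    exact SimAux.similar_of_sq ha hX hsq hrk.symm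
  · refine ⟨n - X.rank, by omega, by omega, Or.inr ?_⟩
    have hk2 : 2 * (n - X.rank) ≤ n := by omega
    have h1 := SimAux.Cmat1_mul_Rmat1 n (n - X.rank) hk2 a
    have h2 := SimAux.Rmat1_mul_Cmat1 n (n - X.rank) hk2 a
    have hsq : Xk n (n - X.rank) a a * Xk n (n - X.rank) a a
        = a • Xk n (n - X.rank) a a := by
      rw [← h1]; exact SimAux.factor_sq a _ _ h2
    have hrk : (Xk n (n - X.rank) a a).rank = X.rank := by
      rw [← h1, SimAux.factor_rank a ha _ _ h2]
      omega
    exact SimAux.similar_of_sq ha hX hsq hrk.symm
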